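/- Let G be a finite abelian p-group with exponent p^n, and let e ≥ 1 and n' ≥ 2 satisfy p^i < n' ≤ p^{i+1}. Then the dimension subgroup D_{n'}(Z_{p^e}G) = G ∩ (1 + ω^{n'}(Z_{p^e}G)) equals G^{p^{e+i}}, while D_1(Z_{p^e}G) = G. -/

import Mathlib

open Polynomial

lemma pow_eq_pow_mod_of_pow_eq_one {M : Type*} [Monoid M] {U : M} {q : ℕ} (h : U ^ q = 1)
    (m : ℕ) : U ^ m = U ^ (m % q) := by
  conv_lhs => rw [← Nat.div_add_mod m q, pow_add, pow_mul, h, one_pow, one_mul]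

lemma choose_mul_eq {v K : ℕ} (hv : 0 < v) (hK : 0 < K) :
    v * (v - 1).choose (K - 1) = v.choose K * K := by
  obtain ⟨v', rfl⟩ : ∃ v', v = v' + 1 := ⟨v - 1, by omega⟩
  obtain ⟨K', rfl⟩ : ∃ K', K = K' + 1 := ⟨K - 1, by omega⟩
  simpa using Nat.add_one_mul_choose_eq v' K' 

lemma pow_dvd_choose_pow {p e i k : ℕ} (hp : p.Prime) (hk : 1 ≤ k) (hk' : k < p ^ (i + 1)) :
    p ^ e ∣ (p ^ (e + i)).choose k := by
  have hk0 : k ≠ 0 := by omega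
  set b := k.factorization p with hb
  set u := k / p ^ b with hu
  have hku : p ^ b * u = k := Nat.ordProj_mul_ordCompl_eq_self k p
  have hpu : ¬ p ∣ u := Nat.not_dvd_ordCompl hp hk0
  have hbk : p ^ b ≤ k := Nat.le_of_dvd (by omega) (Nat.ordProj_dvd k p)
  have hbi : b ≤ i := by
    by_contra hbi
    have : p ^ (i + 1) ≤ p ^ b := Nat.pow_le_pow_right hp.pos (by omega)
    omega
  have key : p ^ (e + i) ∣ (p ^ (e + i)).choose k * k := by
    rw [← choose_mul_eq (Nat.pow_pos hp.pos) hk]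
    exact dvd_mul_right _ _
  nth_rewrite 2 [← hku] at key
  rw [← mul_assoc] at key
  have hcop : Nat.Coprime (p ^ (e + i)) u :=
    Nat.Coprime.pow_left _ ((Nat.Prime.coprime_iff_not_dvd hp).mpr hpu)
  have key2 : p ^ (e + i) ∣ (p ^ (e + i)).choose k * p ^ b :=
    hcop.dvd_of_dvd_mul_right key
  have key3 : p ^ (e + i - b) * p ^ b ∣ (p ^ (e + i)).choose k * p ^ b := by
    rwa [← pow_add, Nat.sub_add_cancel (by omega)]
  have key4 : p ^ (e + i - b) ∣ (p ^ (e + i)).choose k :=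
    (mul_dvd_mul_iff_right ((Nat.pow_pos (n := b) hp.pos).ne')).mp key3
  exact dvd_trans (pow_dvd_pow p (by omega)) key4

lemma not_dvd_choose_pred {p : ℕ} (hp : p.Prime) :
    ∀ (j : ℕ) {a u : ℕ}, j ≤ a → 0 < u → ¬ p ∣ u →
      ¬ p ∣ (p ^ a * u - 1).choose (p ^ j - 1) := by
  haveI : Fact p.Prime := ⟨hp⟩
  have hp1 : 1 < p := hp.one_lt
  intro j
  induction j with
  | zero =>
    intro a u _ _ _
    simpa using hp.not_dvd_one
  | succ j ih =>
    intro a u hja hu hpu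
    have ha1 : 1 ≤ a := by omega
    have hmoddiv : ∀ M : ℕ, 1 ≤ M → (p * M - 1) % p = p - 1 ∧ (p * M - 1) / p = M - 1 := by
      intro M hM
      have h1 : p ≤ p * M := Nat.le_mul_of_pos_right p hM
      have h3 : p * (M - 1) = p * M - p := by rw [Nat.mul_sub, mul_one]
      have decomp : p * M - 1 = (p - 1) + p * (M - 1) := by omega
      rw [decomp]
      constructor
      · rw [Nat.add_mul_mod_self_left, Nat.mod_eq_of_lt (by omega)]
      · rw [Nat.add_mul_div_left _ _ hp.pos, Nat.div_eq_of_lt (by omega), zero_add]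
    have hMu : 1 ≤ p ^ (a - 1) * u := Nat.mul_pos (Nat.pow_pos hp.pos) hu
    have hnum : p ^ a * u = p * (p ^ (a - 1) * u) := by
      rw [← mul_assoc, ← pow_succ']
      congr 2
      omega
    have hden : p ^ (j + 1) = p * p ^ j := by rw [pow_succ']
    have h1 := hmoddiv (p ^ (a - 1) * u) hMu
    have h2 := hmoddiv (p ^ j) (Nat.pow_pos hp.pos)
    have lucas := Choose.choose_modEq_choose_mod_mul_choose_div_nat
      (p := p) (n := p ^ a * u - 1) (k := p ^ (j + 1) - 1)
    rw [hnum, hden] at lucas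
    rw [h1.1, h1.2, h2.1, h2.2, Nat.choose_self, one_mul] at lucas
    rw [hnum, hden]
    intro hdvd
    exact ih (a := a - 1) (u := u) (by omega) hu hpu
      (Nat.modEq_zero_iff_dvd.mp (lucas.symm.trans (Nat.modEq_zero_iff_dvd.mpr hdvd)))

lemma exists_choose_not_dvd {p e i v : ℕ} (hp : p.Prime) (he : 1 ≤ e) (h0 : 0 < v)
    (hv : v < p ^ (e + i)) : ∃ K, 1 ≤ K ∧ K ≤ p ^ i ∧ ¬ p ^ e ∣ v.choose K := by
  set a := v.factorization p with ha
  set u := v / p ^ a with hu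
  have hvu : p ^ a * u = v := Nat.ordProj_mul_ordCompl_eq_self v p
  have hpu : ¬ p ∣ u := Nat.not_dvd_ordCompl hp h0.ne'
  have hu0 : 0 < u := Nat.ordCompl_pos p h0.ne'
  have hav : p ^ a ≤ v := Nat.ordProj_le p h0.ne'
  have haei : a < e + i := by
    have h' : p ^ a < p ^ (e + i) := lt_of_le_of_lt hav hv
    exact (Nat.pow_lt_pow_iff_right hp.one_lt).mp h'
  set j := min i a with hj
  refine ⟨p ^ j, Nat.pow_pos hp.pos, Nat.pow_le_pow_right hp.pos (by omega), ?_⟩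
  intro hdvd
  have hK0 : 0 < p ^ j := Nat.pow_pos hp.pos
  have key := choose_mul_eq h0 hK0
  have hnd : ¬ p ∣ (v - 1).choose (p ^ j - 1) := by
    rw [← hvu]
    exact not_dvd_choose_pred hp j (by omega) hu0 hpu
  have hdvd2 : p ^ (e + j) ∣ v.choose (p ^ j) * p ^ j := by
    rw [pow_add]
    exact mul_dvd_mul hdvd dvd_rfl
  rw [← key, mul_comm v] at hdvd2
  have hcop : Nat.Coprime (p ^ (e + j)) ((v - 1).choose (p ^ j - 1)) :=
    Nat.Coprime.pow_left _ ((hp.coprime_iff_not_dvd).mpr hnd)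
  have hdvdv : p ^ (e + j) ∣ v := hcop.dvd_of_dvd_mul_left hdvd2
  rw [← hvu] at hdvdv
  have hcopu : Nat.Coprime (p ^ (e + j)) u :=
    Nat.Coprime.pow_left _ ((hp.coprime_iff_not_dvd).mpr hpu)
  have hfin : p ^ (e + j) ∣ p ^ a := hcopu.dvd_of_dvd_mul_right hdvdv
  have hle : p ^ (e + j) ≤ p ^ a := Nat.le_of_dvd (Nat.pow_pos hp.pos) hfin
  have := (Nat.pow_le_pow_iff_right hp.one_lt).mp hle
  omega



/-- The augmentation map of a group ring. -/
noncomputable def aug (R G : Type*) [CommRing R] [CommGroup G] :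
    MonoidAlgebra R G →ₐ[R] R := MonoidAlgebra.lift R R G 1

/-- The augmentation ideal of a group ring. -/
noncomputable def augIdeal (R G : Type*) [CommRing R] [CommGroup G] :
    Ideal (MonoidAlgebra R G) := RingHom.ker (aug R G).toRingHom

/-- Dimension subgroups of `Z_{p^e}G`: `D_1 = G`, and for `p^i < n' ≤ p^{i+1}`,
`D_{n'}(Z_{p^e}G) = G^{p^{e+i}}`. -/
theorem stmt_9 (p e n n' i : ℕ) (hp : p.Prime) (he : 1 ≤ e)
    (G : Type*) [CommGroup G] [Fintype G] (hG : IsPGroup p G)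
    (hexp : Monoid.exponent G = p ^ n) (hn' : 2 ≤ n')
    (h1 : p ^ i < n') (h2 : n' ≤ p ^ (i + 1)) :
    (∀ g : G,
        (MonoidAlgebra.of (ZMod (p ^ e)) G g - 1 ∈ (augIdeal (ZMod (p ^ e)) G) ^ n' ↔
          ∃ h : G, g = h ^ p ^ (e + i))) ∧
      (∀ g : G, MonoidAlgebra.of (ZMod (p ^ e)) G g - 1 ∈
        (augIdeal (ZMod (p ^ e)) G) ^ 1) := by
  classical
  set R := ZMod (p ^ e) with hR
  have hp1 : 1 < p := hp.one_lt
  have aug_of : ∀ x : G, aug R G (MonoidAlgebra.of R G x) = 1 := by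
    intro x
    simp [aug, MonoidAlgebra.lift_of]
  have mem_aug : ∀ z : MonoidAlgebra R G, z ∈ augIdeal R G ↔ aug R G z = 0 := by
    intro z
    simp [augIdeal, RingHom.mem_ker]
  have mem_sub : ∀ x : G, MonoidAlgebra.of R G x - 1 ∈ augIdeal R G := by
    intro x
    rw [mem_aug, map_sub, map_one, aug_of, sub_self]
  refine ⟨?_, by intro g; simpa [pow_one] using mem_sub g⟩
  intro g
  constructor
  · -- hard direction
    intro hmem
    by_contra hng
    push_neg at hng
    set q := p ^ (e + i) with hqdef
    have hq1 : 1 < q := Nat.one_lt_pow (by omega) hp1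
    haveI : NeZero q := ⟨by omega⟩
    set H : Subgroup G := (powMonoidHom q : G →* G).range with hH
    have hgH : g ∉ H := by
      rintro ⟨x, hx⟩
      exact hng x (by simpa [powMonoidHom_apply] using hx.symm)
    have hQexp : ∀ x : G ⧸ H, x ^ q = 1 := by
      intro x
      induction x using QuotientGroup.induction_on with
      | H x =>
        rw [← QuotientGroup.mk_pow, QuotientGroup.eq_one_iff]
        exact ⟨x, rfl⟩
    have hgQ : (QuotientGroup.mk g : G ⧸ H) ≠ 1 := by
      rw [Ne, QuotientGroup.eq_one_iff]
      exact hgH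
    obtain ⟨ι, hι, nn, hnn, ⟨eQ⟩⟩ :=
      CommGroup.equiv_prod_multiplicative_zmod_of_finite (G ⧸ H)
    obtain ⟨i₀, hi₀⟩ : ∃ i₀, eQ (QuotientGroup.mk g) i₀ ≠ 1 := by
      by_contra hco
      push_neg at hco
      exact hgQ ((MulEquiv.map_eq_one_iff eQ).mp (funext hco))
    haveI : NeZero (nn i₀) := ⟨by have := hnn i₀; omega⟩
    set c : ZMod (nn i₀) := (eQ (QuotientGroup.mk g) i₀).toAdd with hcdef
    have hc : c ≠ 0 := by
      simpa [hcdef, toAdd_eq_zero] using hi₀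
    have hdvdq : nn i₀ ∣ q := by
      have hy : (eQ.symm (Pi.mulSingle i₀ (Multiplicative.ofAdd (1 : ZMod (nn i₀))))) ^ q = 1 :=
        hQexp _
      have hy' : (Pi.mulSingle i₀ (Multiplicative.ofAdd (1 : ZMod (nn i₀))) :
          ∀ j, Multiplicative (ZMod (nn j))) ^ q = 1 := by
        apply eQ.symm.injective
        simpa using hy
      have horder := orderOf_dvd_of_pow_eq_one hy'
      rwa [orderOf_piMulSingle, orderOf_ofAdd_eq_addOrderOf, ZMod.addOrderOf_one] at horder
    set s := q / nn i₀ with hsdef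
    have hns : nn i₀ * s = q := Nat.mul_div_cancel' hdvdq
    have hs0 : 0 < s := by
      rcases Nat.eq_zero_or_pos s with h | h
      · rw [h, mul_zero] at hns; omega
      · exact h
    have keymod : ∀ x : ℕ, (((x % nn i₀) * s : ℕ) : ZMod q) = ((x * s : ℕ) : ZMod q) := by
      intro x
      have hmeq : (x % nn i₀) * s ≡ x * s [MOD (nn i₀) * s] :=
        Nat.ModEq.mul_right' s (Nat.mod_modEq x (nn i₀))
      rw [hns] at hmeq
      exact (ZMod.natCast_eq_natCast_iff _ _ _).mpr hmeq
    set φ : ZMod (nn i₀) →+ ZMod q :=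
      { toFun := fun x => ((x.val * s : ℕ) : ZMod q)
        map_zero' := by simp
        map_add' := by
          intro x y
          rw [ZMod.val_add, keymod, Nat.add_mul, Nat.cast_add] } with hφdef
    set f : G →* Multiplicative (ZMod q) :=
      (AddMonoidHom.toMultiplicative φ).comp
        ((Pi.evalMonoidHom (fun j => Multiplicative (ZMod (nn j))) i₀).comp
          (eQ.toMonoidHom.comp (QuotientGroup.mk' H))) with hfdef
    have hfg : (f g).toAdd = ((c.val * s : ℕ) : ZMod q) := rfl
    -- the truncated polynomial ring
    set N := p ^ i + 1 with hNdef
    have hNn' : N ≤ n' := h1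
    set I : Ideal (Polynomial R) := Ideal.span {(X : Polynomial R) ^ N} with hIdef
    set mk : Polynomial R →ₐ[R] (Polynomial R ⧸ I) := Ideal.Quotient.mkₐ R I with hmkdef
    set ξ : Polynomial R ⧸ I := mk X with hξdef
    have hmk_surj : ∀ t : Polynomial R ⧸ I, ∃ w, mk w = t := fun t =>
      Ideal.Quotient.mkₐ_surjective R I t
    have hmk_zero : ∀ w : Polynomial R, mk w = 0 ↔ w ∈ I := by
      intro w
      rw [hmkdef, Ideal.Quotient.mkₐ_eq_mk]
      exact Ideal.Quotient.eq_zero_iff_mem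
    have hξN : ξ ^ N = 0 := by
      rw [hξdef, ← map_pow, hmk_zero]
      exact Ideal.subset_span (Set.mem_singleton _)
    have hcast0 : ∀ d : ℕ, 1 ≤ d → d ≤ p ^ i → ((q.choose d : R)) = 0 := by
      intro d h1d h2d
      refine (ZMod.natCast_eq_zero_iff _ _).mpr ?_
      refine pow_dvd_choose_pow hp h1d ?_
      have : p ^ i < p ^ (i + 1) := Nat.pow_lt_pow_right hp1 (by omega)
      omega
    have hξq : (1 + ξ) ^ q = 1 := by
      have hmem' : ((1 + X : Polynomial R) ^ q - 1) ∈ I := by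
        rw [hIdef, Ideal.mem_span_singleton]
        rw [Polynomial.X_pow_dvd_iff]
        intro d hd
        rw [Polynomial.coeff_sub, Polynomial.coeff_one_add_X_pow]
        rcases Nat.eq_zero_or_pos d with rfl | hd0
        · simp
        · rw [Polynomial.coeff_one, if_neg (by omega), hcast0 d hd0 (by omega), sub_zero]
      have h0 := (hmk_zero _).mpr hmem'
      rw [map_sub, map_pow, map_add, map_one, sub_eq_zero] at h0
      exact h0
    set ψ : Multiplicative (ZMod q) →* (Polynomial R ⧸ I) :=
      { toFun := fun t => (1 + ξ) ^ t.toAdd.val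
        map_one' := by simp
        map_mul' := by
          intro a b
          simp only [toAdd_mul]
          rw [ZMod.val_add, ← pow_eq_pow_mod_of_pow_eq_one hξq, pow_add] } with hψdef
    set Φ := (MonoidAlgebra.lift R (Polynomial R ⧸ I) G) (ψ.comp f) with hΦdef
    have hΦof : ∀ x : G, Φ (MonoidAlgebra.of R G x) = (1 + ξ) ^ ((f x).toAdd.val) := by
      intro x
      rw [hΦdef, MonoidAlgebra.lift_of]
      rfl
    have hIker : ∀ a ∈ I, (Polynomial.aeval (0 : R)) a = 0 := by
      intro a ha
      rw [hIdef, Ideal.mem_span_singleton] at ha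
      obtain ⟨b, rfl⟩ := ha
      rw [map_mul, map_pow, Polynomial.aeval_X, zero_pow (by omega : N ≠ 0), zero_mul]
    set ε : (Polynomial R ⧸ I) →ₐ[R] R := Ideal.Quotient.liftₐ I (Polynomial.aeval (0 : R)) hIker
      with hεdef
    have hεmk : ∀ w : Polynomial R, ε (mk w) = w.coeff 0 := by
      intro w
      rw [hεdef, hmkdef, Ideal.Quotient.liftₐ_apply, Ideal.Quotient.mkₐ_eq_mk]
      show (Polynomial.aeval (0 : R)) w = w.coeff 0
      rw [Polynomial.coeff_zero_eq_eval_zero, ← Polynomial.coe_aeval_eq_eval]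
    have hεξ : ε ξ = 0 := by
      rw [hξdef, hεmk]
      simp
    have hcomp : ∀ z, ε (Φ z) = aug R G z := by
      have hext : ε.comp Φ = aug R G := by
        apply MonoidAlgebra.algHom_ext
        intro x
        rw [← MonoidAlgebra.of_apply, AlgHom.comp_apply, hΦof, map_pow, map_add, map_one, hεξ,
          add_zero, one_pow, aug_of]
        exact Subsingleton.elim _ _
      intro z
      rw [← hext]
      rfl
    have hωsub : Ideal.map Φ (augIdeal R G) ≤ Ideal.span {ξ} := by
      rw [Ideal.map_le_iff_le_comap]
      intro z hz
      rw [Ideal.mem_comap]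
      obtain ⟨w, hw⟩ := hmk_surj (Φ z)
      have h0 : w.coeff 0 = 0 := by
        have hc' := hcomp z
        rw [(mem_aug z).mp hz, ← hw, hεmk] at hc'
        exact hc'
      obtain ⟨w', rfl⟩ := Polynomial.X_dvd_iff.mpr h0
      rw [← hw, map_mul]
      exact Ideal.mul_mem_right _ _ (Ideal.subset_span (Set.mem_singleton ξ))
    have hΦmem : Φ (MonoidAlgebra.of R G g - 1) ∈ Ideal.span {ξ} ^ n' := by
      have hmm : Φ (MonoidAlgebra.of R G g - 1) ∈ Ideal.map Φ ((augIdeal R G) ^ n') :=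
        Ideal.mem_map_of_mem _ hmem
      rw [Ideal.map_pow] at hmm
      exact Ideal.pow_right_mono hωsub n' hmm
    have hzero : Φ (MonoidAlgebra.of R G g - 1) = 0 := by
      rw [Ideal.span_singleton_pow] at hΦmem
      have hξn' : ξ ^ n' = 0 := by
        have hsplit : ξ ^ n' = ξ ^ N * ξ ^ (n' - N) := by
          rw [← pow_add, Nat.add_sub_cancel' hNn']
        rw [hsplit, hξN, zero_mul]
      rw [hξn', Ideal.mem_span_singleton, zero_dvd_iff] at hΦmem
      exact hΦmem
    have hunit : (1 + ξ) ^ (c.val * s) = 1 := by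
      rw [map_sub, map_one, sub_eq_zero, hΦof, hfg, ZMod.val_natCast,
        ← pow_eq_pow_mod_of_pow_eq_one hξq] at hzero
      exact hzero
    have hv0 : 0 < c.val * s := Nat.mul_pos (ZMod.val_pos.mpr hc) hs0
    have hvq : c.val * s < q := by
      have hcv : c.val < nn i₀ := ZMod.val_lt c
      calc c.val * s < nn i₀ * s := by
            exact (Nat.mul_lt_mul_right hs0).mpr hcv
        _ = q := hns
    obtain ⟨K, hK1, hK2, hKnd⟩ := exists_choose_not_dvd hp he hv0 hvq
    have hpoly : ((1 + X : Polynomial R) ^ (c.val * s) - 1) ∈ I := by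
      rw [← hmk_zero]
      rw [map_sub, map_pow, map_add, map_one, hunit, sub_self]
    rw [hIdef, Ideal.mem_span_singleton, Polynomial.X_pow_dvd_iff] at hpoly
    have hco := hpoly K (by omega)
    rw [Polynomial.coeff_sub, Polynomial.coeff_one_add_X_pow, Polynomial.coeff_one,
      if_neg (by omega), sub_zero] at hco
    exact hKnd ((ZMod.natCast_eq_zero_iff _ _).mp hco)
  · -- easy direction
    rintro ⟨h, rfl⟩
    set q := p ^ (e + i) with hqdef
    set z := MonoidAlgebra.of R G h - 1 with hz
    have hzmem : z ∈ augIdeal R G := mem_sub h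
    have hofh : MonoidAlgebra.of R G h = z + 1 := by
      rw [hz, sub_add_cancel]
    have expand : MonoidAlgebra.of R G (h ^ q)
        = 1 + ∑ k ∈ Finset.Ico 1 (q + 1), z ^ k * ((q.choose k : ℕ) : MonoidAlgebra R G) := by
      rw [map_pow, hofh, add_pow]
      rw [Finset.range_eq_Ico, Finset.sum_eq_sum_Ico_succ_bot (Nat.succ_pos q)]
      simp
    rw [expand, add_sub_cancel_left]
    refine Ideal.sum_mem _ ?_
    intro k hk
    simp only [Finset.mem_Ico] at hk
    rcases le_or_gt n' k with hcase | hcase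
    · have hzk : z ^ k = z ^ n' * z ^ (k - n') := by
        rw [← pow_add, Nat.add_sub_cancel' hcase]
      rw [hzk, mul_assoc]
      exact Ideal.mul_mem_right _ _ (Ideal.pow_mem_pow hzmem n')
    · have hdv : p ^ e ∣ q.choose k := pow_dvd_choose_pow hp hk.1 (lt_of_lt_of_le hcase h2)
      have hcR : ((q.choose k : ℕ) : R) = 0 := (ZMod.natCast_eq_zero_iff _ _).mpr hdv
      have hc0 : ((q.choose k : ℕ) : MonoidAlgebra R G) = 0 := by
        rw [← map_natCast (algebraMap R (MonoidAlgebra R G)) (q.choose k), hcR, map_zero]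
      rw [hc0, mul_zero]
      exact Ideal.zero_mem _
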